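/- Fix a k-anxious root of unity α, let m be the smallest positive integer such that α^{k^m} = α, and let 𝒜 be the disjoint union of the sets A_{α^{k^i}} for 0 ≤ i ≤ m−1. Let (c_1,…,c_m) be a sequence of rational functions of length exactly m (possibly containing zero terms). If clm_{(a_i)}(c_i) ≥ 0 for every (a_i) ∈ 𝒜, then there exists a nonzero polynomial h ∈ K[z] such that the sequence h*(c_i) is α^{k^i}-calm for every i ≥ 0, i.e. no term of h*(c_i) has a pole at any α^{k^i}. -/

import Mathlib

open Polynomial

attribute [local instance] Classical.propDecidable

noncomputable section

variable {K : Type*} [Field K]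

/-- Integer order of vanishing of a rational function at `α` (junk value `0` for `c = 0`). -/
def vInt (α : K) (c : RatFunc K) : ℤ :=
  (c.num.rootMultiplicity α : ℤ) - (c.denom.rootMultiplicity α : ℤ)

/-- The `(z - α)`-adic valuation on `K(z)`, with `vAt α 0 = ⊤`. -/
def vAt (α : K) (c : RatFunc K) : WithTop ℤ :=
  if c = 0 then ⊤ else (vInt α c : WithTop ℤ)

/-- Substitution `z ↦ z^i` in a rational function. -/
def substPow (i : ℕ) (c : RatFunc K) : RatFunc K :=
  RatFunc.eval (algebraMap K (RatFunc K)) (RatFunc.X ^ i) c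

/-- A polynomial viewed as a rational function. -/
def toRat (p : Polynomial K) : RatFunc K := algebraMap (Polynomial K) (RatFunc K) p

/-- A rational function is a polynomial. -/
def IsPolyFun (c : RatFunc K) : Prop := ∃ p : Polynomial K, c = toRat p

def IsRootOfUnity (α : K) : Prop := ∃ m : ℕ, 0 < m ∧ α ^ m = 1

/-- `α` is `k`-calm: zero, or a root of unity whose order is not coprime to `k`. -/
def IsCalmNum (k : ℕ) (α : K) : Prop :=
  α = 0 ∨ (0 < orderOf α ∧ ¬ Nat.Coprime (orderOf α) k)

def IsAnxious (k : ℕ) (α : K) : Prop := ¬ IsCalmNum k α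

/-- A rational function is `k`-calm: no poles at `k`-anxious numbers. -/
def IsCalmFun (k : ℕ) (c : RatFunc K) : Prop :=
  ∀ α : K, IsAnxious k α → 0 ≤ vAt α c

/-- Action of a rational function `h` on a finite sequence `(c_1, …, c_n)`;
the index `i : Fin n` stands for the 1-based index `i+1`. -/
def act (k : ℕ) (h : RatFunc K) {n : ℕ} (c : Fin n → RatFunc K) : Fin n → RatFunc K :=
  fun i => substPow (k ^ (i.1 + 1)) h / h * c i

def IsPrecalmSeq (k : ℕ) {n : ℕ} (c : Fin n → RatFunc K) : Prop :=
  ∃ h : Polynomial K, h ≠ 0 ∧ ∀ i, IsCalmFun k (act k (toRat h) c i)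

/-- Partial sums `ā_i = a_0 + … + a_{i-1}` of an infinite sequence with values in `{1,…,n}`. -/
def abarInf {n : ℕ} (a : ℕ → Fin n) (i : ℕ) : ℕ :=
  ∑ j ∈ Finset.range i, ((a j).1 + 1)

/-- Partial sums for a finite sequence (a list). -/
def abarList {n : ℕ} (l : List (Fin n)) (i : ℕ) : ℕ :=
  ((l.take i).map (fun j => j.1 + 1)).sum

/-- Full sum `ā_μ` of a finite sequence. -/
def barSum {n : ℕ} (l : List (Fin n)) : ℕ := (l.map (fun j => j.1 + 1)).sum

/-- Calmness w.r.t. an anxious `α` that is not a root of unity and an infinite sequence. -/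
def clmInf (k : ℕ) (α : K) {n : ℕ} (c : Fin n → RatFunc K) (a : ℕ → Fin n) : WithTop ℤ :=
  if ∃ i, c (a i) = 0 then ⊤
  else ((∑ᶠ i : ℕ, vInt (α ^ k ^ abarInf a i) (c (a i)) : ℤ) : WithTop ℤ)

/-- Calmness w.r.t. an anxious root of unity `α` and a finite sequence. -/
def clmList (k : ℕ) (α : K) {n : ℕ} (c : Fin n → RatFunc K) (l : List (Fin n)) : WithTop ℤ :=
  ∑ i : Fin l.length, vAt (α ^ k ^ abarList l i.1) (c (l.get i))

/-- Calmness of a single rational function w.r.t. an anxious `α`. -/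
def clmOne (k : ℕ) (α : K) (c : RatFunc K) : WithTop ℤ :=
  if hμ : ∃ μ : ℕ, 0 < μ ∧ α ^ k ^ μ = α then
    ∑ i ∈ Finset.range (Nat.find hμ), vAt (α ^ k ^ i) c
  else if c = 0 then ⊤
  else ((∑ᶠ i : ℕ, vInt (α ^ k ^ i) c : ℤ) : WithTop ℤ)

/-- The `k`-kernel of a sequence. -/
def kernelSet (k : ℕ) (a : ℕ → K) : Set (ℕ → K) :=
  { b | ∃ e r : ℕ, r < k ^ e ∧ b = fun i => a (k ^ e * i + r) }

/-- `k`-regularity of a formal power series. -/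
def IsRegularSeries (k : ℕ) (f : PowerSeries K) : Prop :=
  FiniteDimensional K (Submodule.span K (kernelSet k (fun i => PowerSeries.coeff i f)))

/-- Cartier operator `Λ_{k,r}`. -/
def cartier (k r : ℕ) (f : PowerSeries K) : PowerSeries K :=
  PowerSeries.mk fun i => PowerSeries.coeff (k * i + r) f

/-- Substitution `z ↦ z^m` in a power series (for `m ≥ 1`). -/
def psSubstPow (m : ℕ) (f : PowerSeries K) : PowerSeries K :=
  PowerSeries.mk fun i => if m ∣ i then PowerSeries.coeff (i / m) f else 0

/-- `f` satisfies the Mahler equation `f(z) = Σ_{i=1}^n c_i(z) f(z^{k^i})`. -/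
def SatisfiesMahler (k : ℕ) {n : ℕ} (c : Fin n → RatFunc K) (f : PowerSeries K) : Prop :=
  ∃ (q : Polynomial K) (p : Fin n → Polynomial K), q ≠ 0 ∧
    (∀ i, toRat q * c i = toRat (p i)) ∧
    (q : PowerSeries K) * f = ∑ i : Fin n, ((p i : PowerSeries K) * psSubstPow (k ^ (i.1 + 1)) f)


/-- Substitution `z ↦ z^m` in a formal Laurent series (for `m ≥ 1`). -/
def lsSubstPow (m : ℕ) (g : LaurentSeries K) : LaurentSeries K :=
  if h : 0 < m then
    HahnSeries.embDomain
      (OrderEmbedding.ofStrictMono (fun n : ℤ => (m : ℤ) * n)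
        (fun a b hab => by
          exact mul_lt_mul_of_pos_left hab (by exact_mod_cast h))) g
  else 0

/-- A Laurent series `g` satisfies the Mahler equation `g(z) = Σ_{i=1}^n b_i(z) g(z^{k^i})`
with polynomial coefficients. -/
def SatisfiesMahlerPolyLS (k : ℕ) {n : ℕ} (b : Fin n → Polynomial K) (g : LaurentSeries K) : Prop :=
  g = ∑ i : Fin n, (((b i : PowerSeries K) : LaurentSeries K) * lsSubstPow (k ^ (i.1 + 1)) g)

/-- Coefficients `d_{i,m}` of the special operators associated to `(c_1, …, c_n)`:
`dCoef k c m i` is `d_{i,m}`, with value `0` outside the range `1 ≤ i ≤ m + n`. -/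
def dCoef (k : ℕ) {n : ℕ} (c : Fin n → RatFunc K) : ℕ → ℕ → RatFunc K
  | 0 => fun i => if h : 1 ≤ i ∧ i ≤ n then c ⟨i - 1, by omega⟩ else 0
  | m + 1 => fun i =>
      if _h1 : i ≤ m then dCoef k c m i
      else if _h2 : i = m + 1 then 0
      else if h3 : i ≤ m + 1 + n then
        dCoef k c m i + dCoef k c m (m + 1) * substPow (k ^ (m + 1)) (c ⟨i - m - 2, by omega⟩)
      else 0

end


noncomputable section
variable {K : Type*} [Field K]

lemma toRat_mul (p q : Polynomial K) : toRat (p * q) = toRat p * toRat q := map_mul _ _ _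
lemma toRat_ne_zero {p : Polynomial K} (hp : p ≠ 0) : toRat p ≠ 0 :=
  RatFunc.algebraMap_ne_zero hp

lemma vInt_eq (β : K) {c : RatFunc K} {P Q : Polynomial K} (hc : c ≠ 0) (hQ : Q ≠ 0)
    (h : c = toRat P / toRat Q) :
    vInt β c = (P.rootMultiplicity β : ℤ) - (Q.rootMultiplicity β : ℤ) := by
  have hP : P ≠ 0 := by
    rintro rfl
    simp [toRat] at h
    exact hc h
  have hnum : c.num ≠ 0 := RatFunc.num_ne_zero hc
  have hden : c.denom ≠ 0 := c.denom_ne_zero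
  have h1 : toRat P * toRat c.denom = toRat c.num * toRat Q := by
    have h2 : toRat c.num / toRat c.denom = toRat P / toRat Q := by
      rw [toRat, toRat, RatFunc.num_div_denom, h]
    rw [div_eq_div_iff (toRat_ne_zero hden) (toRat_ne_zero hQ)] at h2
    linear_combination h2.symm
  have h3 : P * c.denom = c.num * Q := by
    apply RatFunc.algebraMap_injective
    simpa only [map_mul, toRat] using h1
  have h4 : (P * c.denom).rootMultiplicity β = (c.num * Q).rootMultiplicity β := by rw [h3]
  rw [Polynomial.rootMultiplicity_mul (mul_ne_zero hP hden),
    Polynomial.rootMultiplicity_mul (mul_ne_zero hnum hQ)] at h4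
  unfold vInt
  omega

lemma substPow_toRat (e : ℕ) (p : Polynomial K) :
    substPow e (toRat p) = toRat (p.comp (Polynomial.X ^ e)) := by
  unfold substPow toRat
  rw [RatFunc.eval_algebraMap]
  have : algebraMap K[X] K[X] p = p := rfl
  rw [this]
  have hc : p.comp (X ^ e) = Polynomial.eval₂ Polynomial.C (X ^ e) p := rfl
  have hf : (algebraMap K[X] (RatFunc K)).comp Polynomial.C = algebraMap K (RatFunc K) := by
    rw [IsScalarTower.algebraMap_eq K K[X] (RatFunc K), Polynomial.algebraMap_eq]
  have hx : algebraMap K[X] (RatFunc K) (Polynomial.X ^ e) = RatFunc.X ^ e := by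
    rw [map_pow, RatFunc.algebraMap_X]
  rw [hc, Polynomial.hom_eval₂, hf, hx]

lemma rootMultiplicity_pow' {q : K[X]} (hq : q ≠ 0) (β : K) (n : ℕ) :
    (q ^ n).rootMultiplicity β = n * q.rootMultiplicity β := by
  induction n with
  | zero => simp
  | succ n ih =>
      rw [pow_succ, Polynomial.rootMultiplicity_mul (mul_ne_zero (pow_ne_zero _ hq) hq), ih]
      ring

lemma binom_ne_zero {β : K} (hβ : β ≠ 0) {e : ℕ} (he : e ≠ 0) :
    (Polynomial.X ^ e - Polynomial.C (β ^ e) : K[X]) ≠ 0 := by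
  intro h
  have := congrArg (Polynomial.eval 0) h
  simp [zero_pow he] at this
  exact hβ this.1

lemma rm_simple {β : K} (hβ : β ≠ 0) {e : ℕ} (he : (e : K) ≠ 0) :
    (Polynomial.X ^ e - Polynomial.C (β ^ e) : K[X]).rootMultiplicity β = 1 := by
  have he0 : e ≠ 0 := by rintro rfl; simp at he
  have hq : (Polynomial.X ^ e - Polynomial.C (β ^ e) : K[X]) ≠ 0 := binom_ne_zero hβ he0
  have hroot : Polynomial.IsRoot (Polynomial.X ^ e - Polynomial.C (β ^ e) : K[X]) β := by
    simp [Polynomial.IsRoot]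
  have h1 : 1 ≤ (Polynomial.X ^ e - Polynomial.C (β ^ e) : K[X]).rootMultiplicity β :=
    (Polynomial.rootMultiplicity_pos hq).mpr hroot
  have h2 : (Polynomial.X ^ e - Polynomial.C (β ^ e) : K[X]).rootMultiplicity β ≤ 1 := by
    by_contra hcon
    push_neg at hcon
    have := Polynomial.isRoot_iterate_derivative_of_lt_rootMultiplicity (n := 1) hcon
    simp only [Function.iterate_one, Polynomial.derivative_sub, Polynomial.derivative_X_pow,
      Polynomial.derivative_C, sub_zero, Polynomial.IsRoot, Polynomial.eval_mul,
      Polynomial.eval_C, Polynomial.eval_pow, Polynomial.eval_X] at this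
    rcases mul_eq_zero.mp this with h | h
    · exact he h
    · exact pow_ne_zero _ hβ h
  omega

lemma rootMultiplicity_comp_pow {p : K[X]} (hp : p ≠ 0) {β : K} (hβ : β ≠ 0) {e : ℕ}
    (he : (e : K) ≠ 0) :
    (p.comp (Polynomial.X ^ e)).rootMultiplicity β = p.rootMultiplicity (β ^ e) := by
  have he0 : e ≠ 0 := by rintro rfl; simp at he
  set r := p.rootMultiplicity (β ^ e) with hr
  set u := p /ₘ (Polynomial.X - Polynomial.C (β ^ e)) ^ r with hu
  have hfac : (Polynomial.X - Polynomial.C (β ^ e)) ^ r * u = p :=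
    Polynomial.pow_mul_divByMonic_rootMultiplicity_eq p _
  have hueval : u.eval (β ^ e) ≠ 0 :=
    Polynomial.eval_divByMonic_pow_rootMultiplicity_ne_zero _ hp
  have hcomp : p.comp (Polynomial.X ^ e) =
      (Polynomial.X ^ e - Polynomial.C (β ^ e)) ^ r * u.comp (Polynomial.X ^ e) := by
    conv_lhs => rw [← hfac]
    rw [Polynomial.mul_comp, Polynomial.pow_comp, Polynomial.sub_comp, Polynomial.X_comp,
      Polynomial.C_comp]
  have hueval' : (u.comp (Polynomial.X ^ e)).eval β ≠ 0 := by
    rwa [Polynomial.eval_comp, Polynomial.eval_pow, Polynomial.eval_X]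
  have hucomp : u.comp (Polynomial.X ^ e) ≠ 0 := by
    intro h; rw [h] at hueval'; simp at hueval'
  have hA : (Polynomial.X ^ e - Polynomial.C (β ^ e) : K[X]) ≠ 0 := binom_ne_zero hβ he0
  rw [hcomp, Polynomial.rootMultiplicity_mul (mul_ne_zero (pow_ne_zero _ hA) hucomp),
    rootMultiplicity_pow' hA, rm_simple hβ he,
    Polynomial.rootMultiplicity_eq_zero (by simpa [Polynomial.IsRoot] using hueval')]
  omega
lemma powpow (k : ℕ) (β : K) (a b : ℕ) : (β ^ k ^ a) ^ k ^ b = β ^ k ^ (a + b) := by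
  rw [← pow_mul, ← pow_add]
lemma barSum_cons {n : ℕ} (i : Fin n) (l : List (Fin n)) :
    barSum (i :: l) = (i.1 + 1) + barSum l := by simp [barSum]
lemma barSum_append {n : ℕ} (l₁ l₂ : List (Fin n)) :
    barSum (l₁ ++ l₂) = barSum l₁ + barSum l₂ := by simp [barSum]
lemma barSum_le {n : ℕ} (l : List (Fin n)) : barSum l ≤ n * l.length := by
  induction l with
  | nil => simp [barSum]
  | cons i l ih =>
      rw [barSum_cons]
      have : i.1 + 1 ≤ n := i.2
      simp only [List.length_cons]
      calc i.1 + 1 + barSum l ≤ n + n * l.length := by omega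
        _ = n * (l.length + 1) := by ring
lemma clmList_nil (k : ℕ) (β : K) {n : ℕ} (c : Fin n → RatFunc K) :
    clmList k β c [] = 0 := by simp [clmList]
lemma clmList_cons (k : ℕ) (β : K) {n : ℕ} (c : Fin n → RatFunc K) (i : Fin n)
    (l : List (Fin n)) :
    clmList k β c (i :: l) = vAt β (c i) + clmList k (β ^ k ^ (i.1 + 1)) c l := by
  unfold clmList
  show (∑ j : Fin (l.length + 1), vAt (β ^ k ^ abarList (i :: l) j.1) (c ((i :: l).get j))) = _
  rw [Fin.sum_univ_succ]
  refine congrArg₂ (· + ·) ?_ ?_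
  · simp [abarList]
  · apply Finset.sum_congr rfl
    intro j _
    have h1 : abarList (i :: l) (j.succ.1) = (i.1 + 1) + abarList l j.1 := by
      simp [abarList, List.take_cons]
    rw [h1, ← powpow k β (i.1 + 1) (abarList l j.1)]
    rfl
lemma clmList_append (k : ℕ) (β : K) {n : ℕ} (c : Fin n → RatFunc K) (l₁ l₂ : List (Fin n)) :
    clmList k β c (l₁ ++ l₂) = clmList k β c l₁ + clmList k (β ^ k ^ barSum l₁) c l₂ := by
  induction l₁ generalizing β with
  | nil => simp [clmList_nil, barSum]
  | cons i l₁ ih =>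
      rw [List.cons_append, clmList_cons, clmList_cons, ih, add_assoc, powpow, barSum_cons]
lemma clmList_singleton (k : ℕ) (β : K) {n : ℕ} (c : Fin n → RatFunc K) (i : Fin n) :
    clmList k β c [i] = vAt β (c i) := by
  rw [clmList_cons, clmList_nil, add_zero]

lemma aux_per (k : ℕ) {m : ℕ} (α : K) (hmfix : α ^ k ^ m = α) {a b : ℕ}
    (h : a % m = b % m) : α ^ k ^ a = α ^ k ^ b := by
  have step : ∀ r q : ℕ, α ^ k ^ (r + m * q) = α ^ k ^ r := by
    intro r q
    induction q with
    | zero => simp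
    | succ q ih =>
        have h2 : r + m * (q + 1) = m + (r + m * q) := by ring
        rw [h2, ← powpow k α m (r + m * q), hmfix, ih]
  calc α ^ k ^ a = α ^ k ^ (a % m + m * (a / m)) := by rw [Nat.mod_add_div]
    _ = α ^ k ^ (a % m) := step _ _
    _ = α ^ k ^ (b % m) := by rw [h]
    _ = α ^ k ^ (b % m + m * (b / m)) := (step _ _).symm
    _ = α ^ k ^ b := by rw [Nat.mod_add_div]

lemma aux_distinct (k : ℕ) {m : ℕ} (hm : 0 < m) (α : K) (hmfix : α ^ k ^ m = α)
    (hmin : ∀ m' : ℕ, 0 < m' → α ^ k ^ m' = α → m ≤ m') :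
    ∀ j1 j2 : ℕ, j1 < m → j2 < m → α ^ k ^ j1 = α ^ k ^ j2 → j1 = j2 := by
  have key : ∀ a b : ℕ, a < b → b < m → α ^ k ^ a = α ^ k ^ b → False := by
    intro a b hab hbm heq
    have h1 : (α ^ k ^ a) ^ k ^ (m - b) = (α ^ k ^ b) ^ k ^ (m - b) := by rw [heq]
    rw [powpow, powpow] at h1
    have h2 : b + (m - b) = m := by omega
    rw [h2, hmfix] at h1
    have h3 := hmin (a + (m - b)) (by omega) h1
    omega
  intro j1 j2 h1 h2 heq
  rcases lt_trichotomy j1 j2 with h | h | h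
  · exact absurd (key j1 j2 h h2 heq) (fun f => f)
  · exact h
  · exact absurd (key j2 j1 h h1 heq.symm) (fun f => f)

def Fmin (k m : ℕ) (c : Fin m → RatFunc K) (β : K) : WithTop ℤ :=
  Finset.inf Finset.univ (fun s : Σ t : Fin (m + 1), (Fin t.1 → Fin m) =>
    clmList k (β ^ k ^ (m * s.1.1 - barSum (List.ofFn s.2))) c (List.ofFn s.2))

lemma Fmin_le (k m : ℕ) (c : Fin m → RatFunc K) (β : K)
    (s : Σ t : Fin (m + 1), (Fin t.1 → Fin m)) :
    Fmin k m c β ≤ clmList k (β ^ k ^ (m * s.1.1 - barSum (List.ofFn s.2))) c (List.ofFn s.2) :=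
  Finset.inf_le (Finset.mem_univ s)

lemma Fmin_nonpos (k m : ℕ) (c : Fin m → RatFunc K) (β : K) : Fmin k m c β ≤ 0 := by
  have := Fmin_le k m c β ⟨⟨0, Nat.succ_pos m⟩, Fin.elim0⟩
  simpa [List.ofFn, clmList_nil] using this

lemma Fmin_exists (k m : ℕ) (c : Fin m → RatFunc K) (β : K) :
    ∃ (t₀ : ℕ) (l₀ : List (Fin m)), t₀ ≤ m ∧ l₀.length = t₀ ∧
      Fmin k m c β = clmList k (β ^ k ^ (m * t₀ - barSum l₀)) c l₀ := by
  have hne : (Finset.univ : Finset (Σ t : Fin (m + 1), (Fin t.1 → Fin m))).Nonempty :=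
    ⟨⟨⟨0, Nat.succ_pos m⟩, Fin.elim0⟩, Finset.mem_univ _⟩
  obtain ⟨s, -, hs⟩ := Finset.exists_mem_eq_inf (Finset.univ) hne
    (fun s : Σ t : Fin (m + 1), (Fin t.1 → Fin m) =>
      clmList k (β ^ k ^ (m * s.1.1 - barSum (List.ofFn s.2))) c (List.ofFn s.2))
  exact ⟨s.1.1, List.ofFn s.2, Nat.lt_succ_iff.mp s.1.2, List.length_ofFn, hs⟩

lemma mod_add_cancel {m y : ℕ} (X : ℕ) (h : y ≡ 0 [MOD m]) : (X + y) % m = X % m := by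
  have h3 : X + y ≡ X + 0 [MOD m] := Nat.ModEq.add_left X h
  rw [Nat.add_zero] at h3
  exact h3

lemma keyA (k : ℕ) {m : ℕ} (hm : 0 < m) (α : K) (hmfix : α ^ k ^ m = α)
    (c : Fin m → RatFunc K)
    (hclm : ∀ i : ℕ, i < m → ∀ l : List (Fin m),
      α ^ k ^ (i + barSum l) = α ^ k ^ i → 0 ≤ clmList k (α ^ k ^ i) c l) :
    ∀ (t : ℕ) (l : List (Fin m)), l.length = t → ∀ j' j : ℕ,
      (j' + barSum l) % m = j % m →
      Fmin k m c (α ^ k ^ j) ≤ clmList k (α ^ k ^ j') c l := by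
  intro t
  induction t using Nat.strong_induction_on with
  | _ t IH =>
  intro l hlen j' j hmod
  by_cases ht : t ≤ m
  · -- short list: it is one of the inf terms
    subst hlen
    have h1 := Fmin_le k m c (α ^ k ^ j) ⟨⟨l.length, by omega⟩, l.get⟩
    rw [List.ofFn_get] at h1
    rw [powpow] at h1
    have hbs : barSum l ≤ m * l.length := barSum_le l
    have hper : α ^ k ^ (j + (m * l.length - barSum l)) = α ^ k ^ j' := by
      apply aux_per k α hmfix
      apply Nat.ModEq.add_right_cancel' (barSum l)
      show (j + (m * l.length - barSum l) + barSum l) % m = (j' + barSum l) % m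
      rw [show j + (m * l.length - barSum l) + barSum l = j + m * l.length from by omega,
        Nat.add_mul_mod_self_left, hmod]
    rwa [hper] at h1
  · -- long list: remove a cycle
    push_neg at ht
    have hlt : m < l.length := by omega
    obtain ⟨s, u, hsu, hum, habar⟩ :
        ∃ s u : ℕ, s < u ∧ u ≤ m ∧ abarList l s % m = abarList l u % m := by
      set g : Fin (m + 1) → Fin m := fun x => ⟨abarList l x.1 % m, Nat.mod_lt _ hm⟩ with hg
      obtain ⟨a, b, hab, hgab⟩ := Fintype.exists_ne_map_eq_of_card_lt g (by simp)
      have hvals : abarList l a.1 % m = abarList l b.1 % m := by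
        have := congrArg Fin.val hgab
        simpa [hg] using this
      rcases lt_trichotomy a.1 b.1 with h | h | h
      · exact ⟨a.1, b.1, h, Nat.lt_succ_iff.mp b.2, hvals⟩
      · exact absurd (Fin.ext h) hab
      · exact ⟨b.1, a.1, h, Nat.lt_succ_iff.mp a.2, hvals.symm⟩
    set l1 := l.take s with hl1
    set mid := (l.drop s).take (u - s) with hmid
    set l3 := l.drop u with hl3
    have hlen1 : l1.length = s := by
      rw [hl1, List.length_take]; omega
    have hlenmid : mid.length = u - s := by
      rw [hmid, List.length_take, List.length_drop]; omega
    have hlen3 : l3.length = l.length - u := by rw [hl3, List.length_drop]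
    have hsplit : l = l1 ++ (mid ++ l3) := by
      have h2 : mid ++ l3 = l.drop s := by
        rw [hmid, hl3]
        have := List.take_append_drop (u - s) (l.drop s)
        rwa [List.drop_drop, show s + (u - s) = u from by omega] at this
      rw [h2, hl1, List.take_append_drop]
    have htakeu : l.take u = l1 ++ mid := by
      rw [hl1, hmid, ← List.take_add, show s + (u - s) = u from by omega]
    have habs : barSum l1 + barSum mid = abarList l u := by
      rw [← barSum_append, ← htakeu]; rfl
    have habs1 : barSum l1 = abarList l s := by rw [hl1]; rfl
    have hmid0 : barSum mid % m = 0 % m := by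
      apply Nat.ModEq.add_left_cancel' (barSum l1)
      show (barSum l1 + barSum mid) % m = (barSum l1 + 0) % m
      rw [habs, Nat.add_zero, habs1, habar]
    have hmidModEq : barSum mid ≡ 0 [MOD m] := hmid0
    have hsplitval : clmList k (α ^ k ^ j') c l =
        clmList k (α ^ k ^ j') c l1 +
          (clmList k (α ^ k ^ (j' + barSum l1)) c mid +
            clmList k (α ^ k ^ (j' + barSum l1 + barSum mid)) c l3) := by
      conv_lhs => rw [hsplit]
      rw [clmList_append, clmList_append, powpow, powpow]
    have hmidpos : 0 ≤ clmList k (α ^ k ^ (j' + barSum l1)) c mid := by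
      have hbase : α ^ k ^ (j' + barSum l1) = α ^ k ^ ((j' + barSum l1) % m) :=
        aux_per k α hmfix (Nat.mod_mod_of_dvd _ dvd_rfl).symm
      rw [hbase]
      apply hclm ((j' + barSum l1) % m) (Nat.mod_lt _ hm) mid
      exact aux_per k α hmfix (mod_add_cancel _ hmidModEq)
    have hl3base : α ^ k ^ (j' + barSum l1 + barSum mid) = α ^ k ^ (j' + barSum l1) := by
      exact aux_per k α hmfix (mod_add_cancel _ hmidModEq)
    have hlen' : (l1 ++ l3).length < t := by
      rw [List.length_append, hlen1, hlen3]; omega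
    have hmod' : (j' + barSum (l1 ++ l3)) % m = j % m := by
      rw [barSum_append]
      have h2 : barSum l = barSum l1 + (barSum mid + barSum l3) := by
        conv_lhs => rw [hsplit]
        rw [barSum_append, barSum_append]
      have hA : j' + barSum l = (j' + (barSum l1 + barSum l3)) + barSum mid := by omega
      calc (j' + (barSum l1 + barSum l3)) % m
          = ((j' + (barSum l1 + barSum l3)) + barSum mid) % m :=
            (mod_add_cancel _ hmidModEq).symm
        _ = (j' + barSum l) % m := by rw [← hA]
        _ = j % m := hmod
    have hIH := IH (l1 ++ l3).length (by omega) (l1 ++ l3) rfl j' j hmod'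
    have hl'val : clmList k (α ^ k ^ j') c (l1 ++ l3) =
        clmList k (α ^ k ^ j') c l1 + clmList k (α ^ k ^ (j' + barSum l1)) c l3 := by
      rw [clmList_append, powpow]
    calc Fmin k m c (α ^ k ^ j)
        ≤ clmList k (α ^ k ^ j') c l1 + clmList k (α ^ k ^ (j' + barSum l1)) c l3 := by
          rw [← hl'val]; exact hIH
      _ ≤ clmList k (α ^ k ^ j') c l1 +
            (clmList k (α ^ k ^ (j' + barSum l1)) c mid +
              clmList k (α ^ k ^ (j' + barSum l1)) c l3) :=
          add_le_add le_rfl (le_add_of_nonneg_left hmidpos)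
      _ = clmList k (α ^ k ^ j') c l := by rw [hsplitval, hl3base]

lemma keyB (k : ℕ) {m : ℕ} (hm : 0 < m) (α : K) (hmfix : α ^ k ^ m = α)
    (c : Fin m → RatFunc K)
    (hclm : ∀ i : ℕ, i < m → ∀ l : List (Fin m),
      α ^ k ^ (i + barSum l) = α ^ k ^ i → 0 ≤ clmList k (α ^ k ^ i) c l)
    (j : ℕ) (i : Fin m) :
    Fmin k m c (α ^ k ^ (j + i.1 + 1)) ≤ Fmin k m c (α ^ k ^ j) + vAt (α ^ k ^ j) (c i) := by
  obtain ⟨t₀, l₀, ht₀, hlen₀, hFeq⟩ := Fmin_exists k m c (α ^ k ^ j)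
  have hble : barSum l₀ ≤ m * t₀ := by
    have := barSum_le l₀; rw [hlen₀] at this; exact this
  have hFeq' : Fmin k m c (α ^ k ^ j) =
      clmList k (α ^ k ^ (j + (m * t₀ - barSum l₀))) c l₀ := by rw [hFeq, powpow]
  have hbarapp : barSum (l₀ ++ [i]) = barSum l₀ + (i.1 + 1) := by
    rw [barSum_append]; simp [barSum]
  have hmodcond : (j + (m * t₀ - barSum l₀) + barSum (l₀ ++ [i])) % m = (j + i.1 + 1) % m := by
    rw [hbarapp, show j + (m * t₀ - barSum l₀) + (barSum l₀ + (i.1 + 1))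
      = (j + i.1 + 1) + m * t₀ from by omega, Nat.add_mul_mod_self_left]
  have hKA := keyA k hm α hmfix c hclm (l₀ ++ [i]).length (l₀ ++ [i]) rfl
    (j + (m * t₀ - barSum l₀)) (j + i.1 + 1) hmodcond
  have hval : clmList k (α ^ k ^ (j + (m * t₀ - barSum l₀))) c (l₀ ++ [i]) =
      Fmin k m c (α ^ k ^ j) + vAt (α ^ k ^ j) (c i) := by
    rw [clmList_append, powpow, clmList_singleton, ← hFeq']
    congr 2
    apply aux_per k α hmfix
    rw [show j + (m * t₀ - barSum l₀) + barSum l₀ = j + m * t₀ from by omega,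
      Nat.add_mul_mod_self_left]
  rw [hval] at hKA
  exact hKA


lemma rm_finprod {ι : Type*} (s : Finset ι) (f : ι → Polynomial K)
    (hf : ∀ i ∈ s, f i ≠ 0) (β : K) :
    (∏ i ∈ s, f i).rootMultiplicity β = ∑ i ∈ s, (f i).rootMultiplicity β := by
  induction s using Finset.cons_induction with
  | empty => simp
  | cons a s ha ih =>
      rw [Finset.prod_cons, Finset.sum_cons,
        Polynomial.rootMultiplicity_mul (mul_ne_zero (hf a (Finset.mem_cons_self a s))
          (Finset.prod_ne_zero_iff.mpr fun i hi => hf i (Finset.mem_cons_of_mem hi))),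
        ih (fun i hi => hf i (Finset.mem_cons_of_mem hi))]

end

theorem stmt13 {K : Type*} [Field K] [IsAlgClosed K] (k : ℕ) (hk : 2 ≤ k)
    (hch : ∀ p : ℕ, p.Prime → CharP K p → ¬ p ∣ k)
    (α : K) (hα : IsAnxious k α) (hru : IsRootOfUnity α)
    (m : ℕ) (hm : 0 < m) (hmfix : α ^ k ^ m = α)
    (hmin : ∀ m' : ℕ, 0 < m' → α ^ k ^ m' = α → m ≤ m')
    (c : Fin m → RatFunc K)
    (hclm : ∀ i : ℕ, i < m → ∀ l : List (Fin m),
      α ^ k ^ (i + barSum l) = α ^ k ^ i → 0 ≤ clmList k (α ^ k ^ i) c l) :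
    ∃ h : Polynomial K, h ≠ 0 ∧
      ∀ (j : ℕ) (i : Fin m), 0 ≤ vAt (α ^ k ^ j) (act k (toRat h) c i) := by
  classical
  have hα0 : α ≠ 0 := fun h0 => hα (Or.inl h0)
  have hkK : (k : K) ≠ 0 := by
    intro h0
    have hchar : CharP K (ringChar K) := ringChar.charP K
    rcases CharP.char_is_prime_or_zero K (ringChar K) with hp | hp
    · exact hch (ringChar K) hp hchar ((CharP.cast_eq_zero_iff K (ringChar K) k).mp h0)
    · have h1 : (ringChar K : ℕ) ∣ k := (CharP.cast_eq_zero_iff K (ringChar K) k).mp h0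
      rw [hp] at h1
      omega
  have hF0 : ∀ a : ℕ, Fmin k m c (α ^ k ^ a) ≤ 0 := fun a => Fmin_nonpos k m c _
  have hex : ∀ a : ℕ, ∃ y : ℤ, (y : WithTop ℤ) = Fmin k m c (α ^ k ^ a) := by
    intro a
    cases hFa : Fmin k m c (α ^ k ^ a) with
    | top =>
        have h1 := hF0 a
        rw [hFa] at h1
        exact absurd h1 (by simp)
    | coe y => exact ⟨y, rfl⟩
  choose x hx using hex
  have hxle : ∀ a, x a ≤ 0 := by
    intro a
    have h1 := hF0 a
    rw [← hx a] at h1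
    exact_mod_cast h1
  have hxmod : ∀ a : ℕ, x a = x (a % m) := by
    intro a
    have hba : α ^ k ^ a = α ^ k ^ (a % m) :=
      aux_per k α hmfix (Nat.mod_mod_of_dvd a dvd_rfl).symm
    have h1 := hx a
    rw [hba, ← hx (a % m)] at h1
    exact_mod_cast h1
  set E : ℕ → ℕ := fun a => (-(x a)).toNat with hEdef
  have hEcast : ∀ a, (E a : ℤ) = - x a := by
    intro a
    simp only [hEdef]
    exact Int.toNat_of_nonneg (by linarith [hxle a])
  set h : Polynomial K :=
    ∏ j' ∈ Finset.range m, (Polynomial.X - Polynomial.C (α ^ k ^ j')) ^ (E j') with hhdef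
  have hhne : h ≠ 0 := by
    rw [hhdef]
    exact Finset.prod_ne_zero_iff.mpr fun j' _ => pow_ne_zero _ (Polynomial.X_sub_C_ne_zero _)
  have hrm : ∀ a : ℕ, h.rootMultiplicity (α ^ k ^ a) = E (a % m) := by
    intro a
    rw [hhdef, rm_finprod _ _ (fun j' _ => pow_ne_zero _ (Polynomial.X_sub_C_ne_zero _))]
    have hterm : ∀ j' ∈ Finset.range m,
        ((Polynomial.X - Polynomial.C (α ^ k ^ j')) ^ E j').rootMultiplicity (α ^ k ^ a)
          = if j' = a % m then E j' else 0 := by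
      intro j' hj'
      rw [rootMultiplicity_pow' (Polynomial.X_sub_C_ne_zero _),
        Polynomial.rootMultiplicity_X_sub_C]
      by_cases hcase : α ^ k ^ a = α ^ k ^ j'
      · have heq2 : j' = a % m := by
          apply aux_distinct k hm α hmfix hmin j' (a % m) (Finset.mem_range.mp hj')
            (Nat.mod_lt _ hm)
          rw [← hcase]
          exact aux_per k α hmfix (Nat.mod_mod_of_dvd a dvd_rfl).symm
        rw [if_pos hcase, if_pos heq2, mul_one]
      · have hne2 : j' ≠ a % m := by
          intro hjm
          apply hcase
          rw [hjm]
          exact aux_per k α hmfix (Nat.mod_mod_of_dvd a dvd_rfl).symm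
        rw [if_neg hcase, if_neg hne2, mul_zero]
    rw [Finset.sum_congr rfl hterm, Finset.sum_ite_eq' (Finset.range m) (a % m) E,
      if_pos (Finset.mem_range.mpr (Nat.mod_lt a hm))]
  refine ⟨h, hhne, ?_⟩
  intro j i
  by_cases hci : c i = 0
  · have hz : act k (toRat h) c i = 0 := by simp [act, hci]
    rw [hz]
    simp only [vAt, if_pos rfl]
    exact le_top
  · have hnum0 : (c i).num ≠ 0 := RatFunc.num_ne_zero hci
    have hden0 : (c i).denom ≠ 0 := (c i).denom_ne_zero
    have hkpow0 : k ^ (i.1 + 1) ≠ 0 := pow_ne_zero _ (by omega)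
    have hEK : ((k ^ (i.1 + 1) : ℕ) : K) ≠ 0 := by
      push_cast
      exact pow_ne_zero _ hkK
    have hcomp0 : h.comp (Polynomial.X ^ k ^ (i.1 + 1)) ≠ 0 := by
      intro h0
      have hl := Polynomial.leadingCoeff_comp (p := h) (q := Polynomial.X ^ k ^ (i.1 + 1))
        (by rw [Polynomial.natDegree_X_pow]; exact hkpow0)
      rw [h0] at hl
      simp only [Polynomial.leadingCoeff_zero, Polynomial.leadingCoeff_X_pow, one_pow,
        mul_one] at hl
      exact hhne (Polynomial.leadingCoeff_eq_zero.mp hl.symm)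
    have hact_eq : act k (toRat h) c i =
        toRat (h.comp (Polynomial.X ^ k ^ (i.1 + 1)) * (c i).num) / toRat (h * (c i).denom) := by
      show substPow (k ^ (i.1 + 1)) (toRat h) / toRat h * c i = _
      rw [substPow_toRat]
      conv_lhs => rw [show (c i) = toRat (c i).num / toRat (c i).denom from
        (by unfold toRat; exact (RatFunc.num_div_denom _).symm)]
      rw [div_mul_div_comm, ← toRat_mul, ← toRat_mul]
    have hactne : act k (toRat h) c i ≠ 0 := by
      rw [hact_eq]
      exact div_ne_zero (toRat_ne_zero (mul_ne_zero hcomp0 hnum0))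
        (toRat_ne_zero (mul_ne_zero hhne hden0))
    have hvInt := vInt_eq (α ^ k ^ j) hactne (mul_ne_zero hhne hden0) hact_eq
    rw [Polynomial.rootMultiplicity_mul (mul_ne_zero hcomp0 hnum0),
        Polynomial.rootMultiplicity_mul (mul_ne_zero hhne hden0)] at hvInt
    have hcompm : (h.comp (Polynomial.X ^ k ^ (i.1 + 1))).rootMultiplicity (α ^ k ^ j)
        = h.rootMultiplicity (α ^ k ^ (j + i.1 + 1)) := by
      rw [rootMultiplicity_comp_pow hhne (pow_ne_zero _ hα0) hEK]
      have hbp : (α ^ k ^ j : K) ^ k ^ (i.1 + 1) = α ^ k ^ (j + i.1 + 1) := by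
        rw [powpow, ← add_assoc]
      rw [hbp]
    rw [hcompm, hrm (j + i.1 + 1), hrm j] at hvInt
    have hKB := keyB k hm α hmfix c hclm j i
    rw [← hx (j + i.1 + 1), ← hx j] at hKB
    have hvci : vAt (α ^ k ^ j) (c i) = ((vInt (α ^ k ^ j) (c i) : ℤ) : WithTop ℤ) := by
      simp only [vAt, if_neg hci]
    rw [hvci] at hKB
    have hKBz : x (j + i.1 + 1) ≤ x j + vInt (α ^ k ^ j) (c i) := by exact_mod_cast hKB
    have hvci2 : vInt (α ^ k ^ j) (c i) =
        ((c i).num.rootMultiplicity (α ^ k ^ j) : ℤ)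
          - ((c i).denom.rootMultiplicity (α ^ k ^ j) : ℤ) := rfl
    have hfin : 0 ≤ vInt (α ^ k ^ j) (act k (toRat h) c i) := by
      rw [hvInt]
      push_cast
      have e1 := hEcast ((j + i.1 + 1) % m)
      have e2 := hEcast (j % m)
      have m1 := hxmod (j + i.1 + 1)
      have m2 := hxmod j
      linarith [hKBz, hvci2]
    simp only [vAt, if_neg hactne]
    exact_mod_cast hfin
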